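/- Let g : {1,…,n} × {1,…,n} → ℝ be symmetric nonnegative edge weights on the complete graph on n ≥ 2 vertices, define the capacity of a path x_1 → ⋯ → x_m as c(x) = min_k g(x_k, x_{k+1}), and define the maximum capacity C = min_{i ≠ j} max over paths from i to j of c(x). If T is a spanning tree that maximizes the minimum edge weight among all spanning trees, then for every pair i ≠ j, the unique path in T from i to j has capacity at least C; consequently C = min over edges (i,j) of T of g(i,j). -/

import Mathlib

/-- The capacity of a path `x 0 → x 1 → ⋯ → x m` (with `m ≥ 1` steps) under edge
weights `g`: the minimum edge weight along the path. -/
noncomputable def pathCapacity {n : ℕ} (g : Fin n → Fin n → ℝ) (m : ℕ)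
    (x : ℕ → Fin n) : ℝ :=
  sInf {y : ℝ | ∃ k < m, y = g (x k) (x (k + 1))}

/-- The maximum (bottleneck) capacity of the weighted complete graph on `Fin n`:
the worst case over pairs `i ≠ j` of the best achievable path capacity from `i` to `j`. -/
noncomputable def maxCapacity {n : ℕ} (g : Fin n → Fin n → ℝ) : ℝ :=
  sInf {y : ℝ | ∃ i j : Fin n, i ≠ j ∧
    y = sSup {c : ℝ | ∃ m : ℕ, 1 ≤ m ∧ ∃ x : ℕ → Fin n,
      x 0 = i ∧ x m = j ∧ c = pathCapacity g m x}}

/-- The minimum edge weight of a graph `T` under edge weights `g`. -/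
noncomputable def minEdgeWeight {n : ℕ} (g : Fin n → Fin n → ℝ)
    (T : SimpleGraph (Fin n)) : ℝ :=
  sInf {y : ℝ | ∃ i j : Fin n, T.Adj i j ∧ y = g i j}

open SimpleGraph in
/-- Deleting a non-separating edge of a connected graph keeps it connected. -/
lemma aux_connected_sdiff {V : Type*} {G : SimpleGraph V} (hG : G.Connected) {v w : V}
    (h : (G \ fromEdgeSet {s(v, w)}).Reachable v w) :
    (G \ fromEdgeSet {s(v, w)}).Connected := by
  have hne : Nonempty V := hG.nonempty
  refine ⟨fun a b => ?_⟩
  obtain ⟨p⟩ := hG.preconnected a b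
  induction p with
  | nil => exact Reachable.refl _
  | @cons a c b hadj q ih =>
    refine Reachable.trans ?_ ih
    by_cases he : s(a, c) = s(v, w)
    · rw [Sym2.eq_iff] at he
      rcases he with ⟨rfl, rfl⟩ | ⟨rfl, rfl⟩
      · exact h
      · exact h.symm
    · refine Adj.reachable ?_
      rw [sdiff_adj]
      refine ⟨hadj, ?_⟩
      rw [fromEdgeSet_adj]
      simp [he]

open SimpleGraph in
/-- Every connected graph on a finite vertex type contains a spanning tree. -/
lemma aux_exists_tree_le {V : Type*} [Fintype V] :
    ∀ (k : ℕ) (G : SimpleGraph V), G.Connected → G.edgeSet.ncard ≤ k →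
      ∃ T : SimpleGraph V, T ≤ G ∧ T.IsTree := by
  intro k
  induction k with
  | zero =>
    intro G hG hcard
    have hfin : G.edgeSet.Finite := Set.toFinite _
    have h0 : G.edgeSet.ncard = 0 := Nat.le_zero.mp hcard
    have : G.edgeSet = ∅ := (Set.ncard_eq_zero hfin).mp h0
    have hbot : G = ⊥ := edgeSet_eq_empty.mp this
    exact ⟨G, le_rfl, ⟨hG, by rw [hbot]; exact isAcyclic_bot⟩⟩
  | succ k ih =>
    intro G hG hcard
    by_cases ha : G.IsAcyclic
    · exact ⟨G, le_rfl, ⟨hG, ha⟩⟩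
    · rw [isAcyclic_iff_forall_adj_isBridge] at ha
      push_neg at ha
      obtain ⟨v, w, hadj, hnb⟩ := ha
      rw [isBridge_iff] at hnb
      push_neg at hnb
      have hreach : (G \ fromEdgeSet {s(v, w)}).Reachable v w := hnb
      set G' := G \ fromEdgeSet {s(v, w)} with hG'
      have hconn' : G'.Connected := aux_connected_sdiff hG hreach
      have hedge' : G'.edgeSet = G.edgeSet \ {s(v, w)} := by
        rw [hG', edgeSet_sdiff, edgeSet_fromEdgeSet, edgeSet_sdiff_sdiff_isDiag]
      have hlt : G'.edgeSet.ncard < G.edgeSet.ncard := by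
        rw [hedge']
        exact Set.ncard_diff_singleton_lt_of_mem ((SimpleGraph.mem_edgeSet G).mpr hadj) (Set.toFinite _)
      obtain ⟨T, hTle, hTt⟩ := ih G' hconn' (by omega)
      exact ⟨T, hTle.trans sdiff_le, hTt⟩

theorem stmt_8 (n : ℕ) (hn : 2 ≤ n) (g : Fin n → Fin n → ℝ)
    (hsym : ∀ i j, g i j = g j i) (hnonneg : ∀ i j, 0 ≤ g i j)
    (T : SimpleGraph (Fin n)) (hT : T.IsTree)
    (hTmax : ∀ T' : SimpleGraph (Fin n), T'.IsTree →
      minEdgeWeight g T' ≤ minEdgeWeight g T) :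
    (∀ i j : Fin n, i ≠ j → ∀ (m : ℕ), 1 ≤ m → ∀ x : ℕ → Fin n,
      x 0 = i → x m = j → (∀ k < m, T.Adj (x k) (x (k + 1))) →
      maxCapacity g ≤ pathCapacity g m x) ∧
    maxCapacity g = minEdgeWeight g T := by
  classical
  -- global upper bound for all weights
  set Eg : Set ℝ := Set.range (fun p : Fin n × Fin n => g p.1 p.2) with hEg
  have hEgfin : Eg.Finite := Set.finite_range _
  set M : ℝ := sSup Eg with hM
  have hgM : ∀ i j, g i j ≤ M := fun i j =>
    le_csSup hEgfin.bddAbove ⟨(i, j), rfl⟩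
  -- basic facts about pathCapacity
  have cap_le : ∀ (m : ℕ) (x : ℕ → Fin n) (k : ℕ), k < m →
      pathCapacity g m x ≤ g (x k) (x (k + 1)) := by
    intro m x k hk
    refine csInf_le ⟨0, ?_⟩ ⟨k, hk, rfl⟩
    rintro y ⟨l, _, rfl⟩
    exact hnonneg _ _
  have le_cap : ∀ (m : ℕ) (x : ℕ → Fin n) (c : ℝ), 1 ≤ m →
      (∀ k < m, c ≤ g (x k) (x (k + 1))) → c ≤ pathCapacity g m x := by
    intro m x c hm hc
    refine le_csInf ⟨g (x 0) (x 1), 0, hm, rfl⟩ ?_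
    rintro y ⟨k, hk, rfl⟩
    exact hc k hk
  have cap_nonneg : ∀ (m : ℕ) (x : ℕ → Fin n), 1 ≤ m → 0 ≤ pathCapacity g m x :=
    fun m x hm => le_cap m x 0 hm (fun k _ => hnonneg _ _)
  -- basic facts about minEdgeWeight
  have mew_le : ∀ (T' : SimpleGraph (Fin n)) (i j : Fin n), T'.Adj i j →
      minEdgeWeight g T' ≤ g i j := by
    intro T' i j h
    refine csInf_le ⟨0, ?_⟩ ⟨i, j, h, rfl⟩
    rintro y ⟨a, b, _, rfl⟩
    exact hnonneg _ _
  have exists_edge : ∀ (T' : SimpleGraph (Fin n)), T'.Connected →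
      ∃ i j : Fin n, T'.Adj i j := by
    intro T' hconn
    have h01 : (⟨0, by omega⟩ : Fin n) ≠ ⟨1, by omega⟩ := by
      simp [Fin.ext_iff]
    obtain ⟨p⟩ := hconn.preconnected ⟨0, by omega⟩ ⟨1, by omega⟩
    cases p with
    | cons h q => exact ⟨_, _, h⟩
  have le_mew : ∀ (T' : SimpleGraph (Fin n)) (c : ℝ), T'.Connected →
      (∀ i j : Fin n, T'.Adj i j → c ≤ g i j) → c ≤ minEdgeWeight g T' := by
    intro T' c hconn hc
    obtain ⟨i0, j0, h0⟩ := exists_edge T' hconn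
    refine le_csInf ⟨g i0 j0, i0, j0, h0, rfl⟩ ?_
    rintro y ⟨a, b, hab, rfl⟩
    exact hc a b hab
  -- the bottleneck set for a pair
  set P : Fin n → Fin n → Set ℝ := fun i j =>
    {c : ℝ | ∃ m : ℕ, 1 ≤ m ∧ ∃ x : ℕ → Fin n,
      x 0 = i ∧ x m = j ∧ c = pathCapacity g m x} with hP
  have P_bddAbove : ∀ i j, BddAbove (P i j) := by
    intro i j
    refine ⟨M, ?_⟩
    rintro c ⟨m, hm, x, _, _, rfl⟩
    exact (cap_le m x 0 hm).trans (hgM _ _)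
  have P_nonneg : ∀ i j, ∀ c ∈ P i j, 0 ≤ c := by
    rintro i j c ⟨m, hm, x, _, _, rfl⟩
    exact cap_nonneg m x hm
  -- the index set of maxCapacity
  set S : Set ℝ := {y : ℝ | ∃ i j : Fin n, i ≠ j ∧ y = sSup (P i j)} with hS
  have hMC : maxCapacity g = sInf S := rfl
  have S_bddBelow : BddBelow S := by
    refine ⟨0, ?_⟩
    rintro y ⟨i, j, _, rfl⟩
    exact Real.sSup_nonneg (P_nonneg i j)
  have S_nonempty : S.Nonempty := by
    refine ⟨_, ⟨0, by omega⟩, ⟨1, by omega⟩, by simp [Fin.ext_iff], rfl⟩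
  set C : ℝ := maxCapacity g with hC
  -- Direction 1: minEdgeWeight g T ≤ C (holds for any tree)
  have dir1 : minEdgeWeight g T ≤ C := by
    rw [hMC]
    refine le_csInf S_nonempty ?_
    rintro y ⟨i, j, hij, rfl⟩
    obtain ⟨p⟩ := hT.isConnected.preconnected i j
    have hm : 1 ≤ p.length := by
      by_contra hlen
      exact hij (p.eq_of_length_eq_zero (by omega))
    have hmem : pathCapacity g p.length (fun k => p.getVert k) ∈ P i j := by
      exact ⟨p.length, hm, fun k => p.getVert k, p.getVert_zero, p.getVert_length, rfl⟩
    refine le_trans ?_ (le_csSup (P_bddAbove i j) hmem)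
    refine le_cap _ _ _ hm ?_
    intro k hk
    exact mew_le T _ _ (p.adj_getVert_succ hk)
  -- The threshold graph
  set GC : SimpleGraph (Fin n) := SimpleGraph.fromRel (fun u v => C ≤ g u v) with hGC
  have hGCadj : ∀ u v : Fin n, GC.Adj u v ↔ u ≠ v ∧ C ≤ g u v := by
    intro u v
    rw [hGC, SimpleGraph.fromRel_adj]
    constructor
    · rintro ⟨hne, h | h⟩
      · exact ⟨hne, h⟩
      · exact ⟨hne, by rw [hsym]; exact h⟩
    · rintro ⟨hne, h⟩
      exact ⟨hne, Or.inl h⟩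
  -- crossing lemma
  have cross : ∀ (A : Set (Fin n)) (x : ℕ → Fin n) (m : ℕ), x 0 ∈ A → x m ∉ A →
      ∃ k < m, x k ∈ A ∧ x (k + 1) ∉ A := by
    intro A x m h0 hm
    induction m with
    | zero => exact absurd h0 hm
    | succ m ihm =>
      by_cases hxm : x m ∈ A
      · exact ⟨m, Nat.lt_succ_self m, hxm, hm⟩
      · obtain ⟨k, hk, h1, h2⟩ := ihm hxm
        exact ⟨k, hk.trans (Nat.lt_succ_self m), h1, h2⟩
  -- GC is connected
  have hGCconn : GC.Connected := by
    have : Nonempty (Fin n) := ⟨⟨0, by omega⟩⟩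
    refine ⟨fun i j => ?_⟩
    by_contra hreach
    have hij : i ≠ j := fun h => hreach (h ▸ SimpleGraph.Reachable.refl i)
    set A : Set (Fin n) := {v | GC.Reachable i v} with hA
    have hiA : i ∈ A := SimpleGraph.Reachable.refl i
    have hjA : j ∉ A := hreach
    -- the set of crossing weights
    set Scr : Set ℝ := {y : ℝ | ∃ u v : Fin n, u ∈ A ∧ v ∉ A ∧ y = g u v} with hScr
    have hScr_fin : Scr.Finite := by
      refine hEgfin.subset ?_
      rintro y ⟨u, v, _, _, rfl⟩
      exact ⟨(u, v), rfl⟩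
    have hScr_ne : Scr.Nonempty := ⟨g i j, i, j, hiA, hjA, rfl⟩
    set W : ℝ := sSup Scr with hW
    have hWmem : W ∈ Scr := Set.Nonempty.csSup_mem hScr_ne hScr_fin
    obtain ⟨u0, v0, hu0, hv0, hWeq⟩ := hWmem
    -- all crossing weights are < C
    have hcrossC : ∀ u v : Fin n, u ∈ A → v ∉ A → g u v < C := by
      intro u v hu hv
      have hne : u ≠ v := fun h => hv (h ▸ hu)
      have hnadj : ¬ GC.Adj u v := fun h => hv (hu.trans h.reachable)
      rw [hGCadj] at hnadj
      push_neg at hnadj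
      exact hnadj hne
    have hWC : W < C := hWeq ▸ hcrossC u0 v0 hu0 hv0
    -- every path from i to j has capacity ≤ W
    have hbot : sSup (P i j) ≤ W := by
      refine Real.sSup_le ?_ (hWeq ▸ hnonneg u0 v0)
      rintro c ⟨m, hm, x, hx0, hxm, rfl⟩
      obtain ⟨k, hk, h1, h2⟩ := cross A x m (hx0 ▸ hiA) (hxm ▸ hjA)
      refine (cap_le m x k hk).trans ?_
      exact le_csSup (hScr_fin.bddAbove) ⟨x k, x (k + 1), h1, h2, rfl⟩
    have hCbot : C ≤ sSup (P i j) := by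
      rw [hMC]
      exact csInf_le S_bddBelow ⟨i, j, hij, rfl⟩
    linarith
  -- spanning tree of GC
  obtain ⟨T', hT'le, hT'tree⟩ := aux_exists_tree_le GC.edgeSet.ncard GC hGCconn le_rfl
  -- Direction 2: C ≤ minEdgeWeight g T
  have dir2 : C ≤ minEdgeWeight g T := by
    refine le_trans ?_ (hTmax T' hT'tree)
    refine le_mew T' C hT'tree.isConnected ?_
    intro a b hab
    exact ((hGCadj a b).mp (hT'le hab)).2
  have heq : C = minEdgeWeight g T := le_antisymm dir2 dir1
  refine ⟨?_, heq⟩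
  intro i j hij m hm x hx0 hxm hadj
  rw [heq]
  refine le_cap m x _ hm ?_
  intro k hk
  exact mew_le T _ _ (hadj k hk)
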